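/- If B* is obtained by thresholding (b*_ij = 1 iff p_ij > 1/2), then for every B ∈ S, F_2(B) − F_2(B*) = (x(B) + c)² − (x(B*) + c)² ≥ 0, where x(B) = Σ_{(i,j)∈E(B)}(1−2p_ij) and c = Σ_{i<j} p_ij; i.e., the excess Fréchet-mean risk of any B over the thresholded graph is the difference of two squares of nonnegative quantities with x(B*) ≤ x(B). -/

import Mathlib

open Finset
open scoped Classical

/-- The set of pairs (i,j) with i < j. -/
def pairs (n : ℕ) : Finset (Fin n × Fin n) :=
  Finset.univ.filter (fun q => q.1 < q.2)

/-- The set `S` of adjacency matrices: symmetric Bool matrices with zero (false) diagonal. -/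
noncomputable def adjS (n : ℕ) : Finset (Matrix (Fin n) (Fin n) Bool) :=
  Finset.univ.filter (fun A => (∀ i j, A i j = A j i) ∧ ∀ i, A i i = false)

/-- The real-valued 0/1 entry of an adjacency matrix. -/
noncomputable def val {n : ℕ} (A : Matrix (Fin n) (Fin n) Bool) (i j : Fin n) : ℝ :=
  if A i j then 1 else 0

/-- The Hamming distance between two graphs. -/
noncomputable def dH {n : ℕ} (A B : Matrix (Fin n) (Fin n) Bool) : ℝ :=
  ∑ q ∈ pairs n, |val A q.1 q.2 - val B q.1 q.2|

/-- The inhomogeneous Erdős–Rényi probability of an adjacency matrix: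
`∏_{i<j} p_ij^{a_ij} (1-p_ij)^{1-a_ij}`. -/
noncomputable def erPr {n : ℕ} (p : Fin n → Fin n → ℝ) (A : Matrix (Fin n) (Fin n) Bool) : ℝ :=
  ∏ q ∈ pairs n, if A q.1 q.2 then p q.1 q.2 else 1 - p q.1 q.2

/-- The edge set of a graph: pairs (i,j), i<j, with b_ij = 1. -/
def edges {n : ℕ} (B : Matrix (Fin n) (Fin n) Bool) : Finset (Fin n × Fin n) :=
  (pairs n).filter (fun q => B q.1 q.2 = true)

lemma mem_pairs {n : ℕ} (q : Fin n × Fin n) : q ∈ pairs n ↔ q.1 < q.2 := by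
  simp [pairs]

noncomputable def toMat {n : ℕ} (f : {q : Fin n × Fin n // q ∈ pairs n} → Bool) :
    Matrix (Fin n) (Fin n) Bool :=
  fun i j =>
    if h : (i, j) ∈ pairs n then f ⟨(i, j), h⟩
    else if h : (j, i) ∈ pairs n then f ⟨(j, i), h⟩ else false

lemma toMat_mem {n : ℕ} (f : {q : Fin n × Fin n // q ∈ pairs n} → Bool) :
    toMat f ∈ adjS n := by
  simp only [adjS, Finset.mem_filter, Finset.mem_univ, true_and]
  constructor
  · intro i j
    rcases lt_trichotomy i j with h | h | h
    · have h1 : ((i, j) : Fin n × Fin n) ∈ pairs n := (mem_pairs _).2 h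
      have h2 : ((j, i) : Fin n × Fin n) ∉ pairs n := by
        simp [mem_pairs]; exact le_of_lt h
      simp [toMat, h1, h2]
    · subst h; rfl
    · have h1 : ((j, i) : Fin n × Fin n) ∈ pairs n := (mem_pairs _).2 h
      have h2 : ((i, j) : Fin n × Fin n) ∉ pairs n := by
        simp [mem_pairs]; exact le_of_lt h
      simp [toMat, h1, h2]
  · intro i
    have h : ((i, i) : Fin n × Fin n) ∉ pairs n := by simp [mem_pairs]
    simp [toMat, h]

lemma toMat_entry {n : ℕ} (f : {q : Fin n × Fin n // q ∈ pairs n} → Bool)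
    (q : {q : Fin n × Fin n // q ∈ pairs n}) : toMat f q.1.1 q.1.2 = f q := by
  have h : ((q.1.1, q.1.2) : Fin n × Fin n) ∈ pairs n := by
    rw [show ((q.1.1, q.1.2) : Fin n × Fin n) = q.1 from rfl]; exact q.2
  simp only [toMat, dif_pos h]

lemma toMat_of_mem {n : ℕ} (A : Matrix (Fin n) (Fin n) Bool) (hA : A ∈ adjS n) :
    toMat (fun q => A q.1.1 q.1.2) = A := by
  simp only [adjS, Finset.mem_filter, Finset.mem_univ, true_and] at hA
  funext i j
  rcases lt_trichotomy i j with h | h | h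
  · have h1 : ((i, j) : Fin n × Fin n) ∈ pairs n := (mem_pairs _).2 h
    simp [toMat, h1]
  · subst h
    have h2 : ((i, i) : Fin n × Fin n) ∉ pairs n := by simp [mem_pairs]
    simp [toMat, h2, hA.2 i]
  · have h1 : ((j, i) : Fin n × Fin n) ∈ pairs n := (mem_pairs _).2 h
    have h2 : ((i, j) : Fin n × Fin n) ∉ pairs n := by
      simp [mem_pairs]; exact le_of_lt h
    simp [toMat, h1, h2, hA.1 i j]

lemma sum_adjS {n : ℕ} (F : Matrix (Fin n) (Fin n) Bool → ℝ) :
    ∑ A ∈ adjS n, F A = ∑ f : {q : Fin n × Fin n // q ∈ pairs n} → Bool, F (toMat f) := by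
  have : ∑ f ∈ (Finset.univ : Finset ({q : Fin n × Fin n // q ∈ pairs n} → Bool)),
      F (toMat f) = ∑ A ∈ adjS n, F A :=
    Finset.sum_bij' (i := fun f (_ : f ∈ Finset.univ) => toMat f)
      (j := fun A (_ : A ∈ adjS n) => fun q => A q.1.1 q.1.2)
      (fun f _ => toMat_mem f) (fun A hA => Finset.mem_univ _)
      (fun f _ => funext fun q => toMat_entry f q)
      (fun A hA => toMat_of_mem A hA)
      (fun f _ => rfl)
  exact this.symm

section aux
variable {ι : Type*} [Fintype ι] [DecidableEq ι]

lemma pair_term (x w : ι → Bool → ℝ) (hw : ∀ i, w i true + w i false = 1) (i j : ι) :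
    ∑ f : ι → Bool, x i (f i) * x j (f j) * ∏ k, w k (f k)
      = if i = j then x i true ^ 2 * w i true + x i false ^ 2 * w i false
        else (x i true * w i true + x i false * w i false) *
             (x j true * w j true + x j false * w j false) := by
  set g : ι → Bool → ℝ :=
    fun k b => (if k = i then x k b else 1) * (if k = j then x k b else 1) * w k b with hg
  have key : ∀ f : ι → Bool, x i (f i) * x j (f j) * ∏ k, w k (f k)
      = ∏ k, g k (f k) := by
    intro f
    simp only [hg, Finset.prod_mul_distrib, Finset.prod_ite_eq', Finset.mem_univ, if_true]
  have hfact : ∑ f : ι → Bool, ∏ k, g k (f k) = ∏ k, (g k true + g k false) := by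
    have := Finset.prod_univ_sum (fun _ : ι => (Finset.univ : Finset Bool)) g
    simp only [Fintype.piFinset_univ] at this
    rw [← this]
    refine Finset.prod_congr rfl fun k _ => ?_
    simp [Fintype.sum_bool]
  simp only [key, hfact]
  have houtside : ∀ k ∈ (Finset.univ : Finset ι), k ∉ ({i, j} : Finset ι) →
      g k true + g k false = 1 := by
    intro k _ hk
    simp only [Finset.mem_insert, Finset.mem_singleton, not_or] at hk
    simp [hg, hk.1, hk.2, hw k]
  rw [← Finset.prod_subset (Finset.subset_univ ({i, j} : Finset ι)) houtside]
  by_cases h : i = j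
  · subst h
    simp [hg]
    ring
  · rw [Finset.prod_pair h]
    simp [hg, h, Ne.symm h]

lemma expect_sq (x w : ι → Bool → ℝ) (hw : ∀ i, w i true + w i false = 1) :
    ∑ f : ι → Bool, (∑ i, x i (f i)) ^ 2 * ∏ i, w i (f i)
      = ∑ i, (x i true ^ 2 * w i true + x i false ^ 2 * w i false)
        + ((∑ i, (x i true * w i true + x i false * w i false)) ^ 2
           - ∑ i, (x i true * w i true + x i false * w i false) ^ 2) := by
  set m := fun i => x i true * w i true + x i false * w i false with hm
  set s := fun i => x i true ^ 2 * w i true + x i false ^ 2 * w i false with hs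
  have expand : ∀ f : ι → Bool, (∑ i, x i (f i)) ^ 2 * ∏ k, w k (f k)
      = ∑ i, ∑ j, x i (f i) * x j (f j) * ∏ k, w k (f k) := by
    intro f
    rw [sq, Finset.sum_mul_sum]
    rw [Finset.sum_mul]
    refine Finset.sum_congr rfl fun i _ => ?_
    rw [Finset.sum_mul]
  calc ∑ f : ι → Bool, (∑ i, x i (f i)) ^ 2 * ∏ i, w i (f i)
      = ∑ f : ι → Bool, ∑ i, ∑ j, x i (f i) * x j (f j) * ∏ k, w k (f k) := by
        exact Finset.sum_congr rfl fun f _ => expand f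
    _ = ∑ i, ∑ j, ∑ f : ι → Bool, x i (f i) * x j (f j) * ∏ k, w k (f k) := by
        rw [Finset.sum_comm]
        exact Finset.sum_congr rfl fun i _ => Finset.sum_comm
    _ = ∑ i, ∑ j, (if i = j then s i else m i * m j) :=
        Finset.sum_congr rfl fun i _ => Finset.sum_congr rfl fun j _ => pair_term x w hw i j
    _ = ∑ i, ∑ j, (m i * m j + if i = j then s i - m i ^ 2 else 0) := by
        refine Finset.sum_congr rfl fun i _ => Finset.sum_congr rfl fun j _ => ?_
        by_cases h : i = j
        · subst h; simp; ring
        · simp [h]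
    _ = ∑ i, s i + ((∑ i, m i) ^ 2 - ∑ i, m i ^ 2) := by
        simp only [Finset.sum_add_distrib, Finset.sum_ite_eq, Finset.mem_univ, if_true]
        rw [← Finset.sum_mul_sum, Finset.sum_sub_distrib]
        rw [sq]
        ring

end aux

lemma F2_eq {n : ℕ} (p : Fin n → Fin n → ℝ) (B : Matrix (Fin n) (Fin n) Bool) :
    ∑ A ∈ adjS n, dH A B ^ 2 * erPr p A
      = (∑ q ∈ pairs n, (if B q.1 q.2 then 1 - p q.1 q.2 else p q.1 q.2)) ^ 2
        + ∑ q ∈ pairs n, p q.1 q.2 * (1 - p q.1 q.2) := by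
  classical
  set x : {q : Fin n × Fin n // q ∈ pairs n} → Bool → ℝ :=
    fun q b => |(if b then (1:ℝ) else 0) - val B q.1.1 q.1.2| with hx
  set w : {q : Fin n × Fin n // q ∈ pairs n} → Bool → ℝ :=
    fun q b => if b then p q.1.1 q.1.2 else 1 - p q.1.1 q.1.2 with hw'
  have hw : ∀ q, w q true + w q false = 1 := by intro q; simp [hw']
  rw [sum_adjS (fun A => dH A B ^ 2 * erPr p A)]
  have hterm : ∀ f : {q : Fin n × Fin n // q ∈ pairs n} → Bool,
      dH (toMat f) B ^ 2 * erPr p (toMat f)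
        = (∑ q, x q (f q)) ^ 2 * ∏ q, w q (f q) := by
    intro f
    have h1 : dH (toMat f) B = ∑ q, x q (f q) := by
      rw [dH, ← Finset.sum_attach (pairs n)
        (fun r => |val (toMat f) r.1 r.2 - val B r.1 r.2|), Finset.univ_eq_attach]
      refine Finset.sum_congr rfl fun q _ => ?_
      simp [hx, _root_.val, toMat_entry]
    have h2 : erPr p (toMat f) = ∏ q, w q (f q) := by
      rw [erPr, ← Finset.prod_attach (pairs n)
        (fun r => if toMat f r.1 r.2 then p r.1 r.2 else 1 - p r.1 r.2), Finset.univ_eq_attach]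
      refine Finset.prod_congr rfl fun q _ => ?_
      simp [hw', toMat_entry]
    rw [h1, h2]
  simp only [hterm]
  rw [expect_sq x w hw]
  have hs_eq : ∀ q : {q : Fin n × Fin n // q ∈ pairs n},
      x q true ^ 2 * w q true + x q false ^ 2 * w q false
        = (if B q.1.1 q.1.2 then 1 - p q.1.1 q.1.2 else p q.1.1 q.1.2) := by
    intro q; by_cases hb : B q.1.1 q.1.2 <;> simp [hx, hw', _root_.val, hb] <;> ring
  have hm_eq : ∀ q : {q : Fin n × Fin n // q ∈ pairs n},
      x q true * w q true + x q false * w q false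
        = (if B q.1.1 q.1.2 then 1 - p q.1.1 q.1.2 else p q.1.1 q.1.2) := by
    intro q; by_cases hb : B q.1.1 q.1.2 <;> simp [hx, hw', _root_.val, hb] <;> ring
  simp only [hs_eq, hm_eq]
  have hM : ∑ q : {q : Fin n × Fin n // q ∈ pairs n},
      (if B q.1.1 q.1.2 then 1 - p q.1.1 q.1.2 else p q.1.1 q.1.2)
        = ∑ q ∈ pairs n, (if B q.1 q.2 then 1 - p q.1 q.2 else p q.1 q.2) := by
    rw [Finset.univ_eq_attach]
    exact Finset.sum_attach (pairs n) (fun r => if B r.1 r.2 then 1 - p r.1 r.2 else p r.1 r.2)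
  have hvar : ∑ q : {q : Fin n × Fin n // q ∈ pairs n},
      ((if B q.1.1 q.1.2 then 1 - p q.1.1 q.1.2 else p q.1.1 q.1.2)
        - (if B q.1.1 q.1.2 then 1 - p q.1.1 q.1.2 else p q.1.1 q.1.2) ^ 2)
        = ∑ q ∈ pairs n, p q.1 q.2 * (1 - p q.1 q.2) := by
    have : ∀ q : {q : Fin n × Fin n // q ∈ pairs n},
        ((if B q.1.1 q.1.2 then 1 - p q.1.1 q.1.2 else p q.1.1 q.1.2)
          - (if B q.1.1 q.1.2 then 1 - p q.1.1 q.1.2 else p q.1.1 q.1.2) ^ 2)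
          = p q.1.1 q.1.2 * (1 - p q.1.1 q.1.2) := by
      intro q; by_cases hb : B q.1.1 q.1.2 <;> simp [hb] <;> ring
    simp only [this]
    rw [Finset.univ_eq_attach]
    exact Finset.sum_attach (pairs n) (fun r => p r.1 r.2 * (1 - p r.1 r.2))
  rw [← hM, ← hvar, Finset.sum_sub_distrib]
  ring

lemma M_split {n : ℕ} (p : Fin n → Fin n → ℝ) (B : Matrix (Fin n) (Fin n) Bool) :
    ∑ q ∈ pairs n, (if B q.1 q.2 then 1 - p q.1 q.2 else p q.1 q.2)
      = (∑ q ∈ edges B, (1 - 2 * p q.1 q.2)) + ∑ q ∈ pairs n, p q.1 q.2 := by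
  have : ∀ q ∈ pairs n, (if B q.1 q.2 then 1 - p q.1 q.2 else p q.1 q.2)
      = (if B q.1 q.2 = true then 1 - 2 * p q.1 q.2 else 0) + p q.1 q.2 := by
    intro q _
    by_cases hb : B q.1 q.2 <;> simp [hb] <;> ring
  rw [Finset.sum_congr rfl this, Finset.sum_add_distrib]
  congr 1
  rw [edges, Finset.sum_filter]

lemma M_nonneg {n : ℕ} (p : Fin n → Fin n → ℝ) (hp : ∀ i j, 0 ≤ p i j ∧ p i j ≤ 1)
    (B : Matrix (Fin n) (Fin n) Bool) :
    0 ≤ ∑ q ∈ pairs n, (if B q.1 q.2 then 1 - p q.1 q.2 else p q.1 q.2) := by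
  refine Finset.sum_nonneg fun q _ => ?_
  by_cases hb : B q.1 q.2 <;> simp [hb]
  · linarith [(hp q.1 q.2).2]
  · exact (hp q.1 q.2).1

theorem stmt19 (n : ℕ) (p : Fin n → Fin n → ℝ)
    (hp : ∀ i j, 0 ≤ p i j ∧ p i j ≤ 1) (hsym : ∀ i j, p i j = p j i)
    (hdiag : ∀ i, p i i = 0)
    (Bstar : Matrix (Fin n) (Fin n) Bool) (hBS : Bstar ∈ adjS n)
    (hBstar : ∀ q ∈ pairs n, (Bstar q.1 q.2 = true ↔ 1 / 2 < p q.1 q.2)) :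
    ∀ B ∈ adjS n,
      ((∑ A ∈ adjS n, (dH A B) ^ 2 * erPr p A) - ∑ A ∈ adjS n, (dH A Bstar) ^ 2 * erPr p A =
          ((∑ q ∈ edges B, (1 - 2 * p q.1 q.2)) + ∑ q ∈ pairs n, p q.1 q.2) ^ 2 -
            ((∑ q ∈ edges Bstar, (1 - 2 * p q.1 q.2)) + ∑ q ∈ pairs n, p q.1 q.2) ^ 2) ∧
      (∑ q ∈ edges Bstar, (1 - 2 * p q.1 q.2) ≤ ∑ q ∈ edges B, (1 - 2 * p q.1 q.2)) ∧
      (0 ≤ (∑ q ∈ edges Bstar, (1 - 2 * p q.1 q.2)) + ∑ q ∈ pairs n, p q.1 q.2) ∧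
      0 ≤ (∑ A ∈ adjS n, (dH A B) ^ 2 * erPr p A) - ∑ A ∈ adjS n, (dH A Bstar) ^ 2 * erPr p A := by
  intro B hB
  have hEq : (∑ A ∈ adjS n, (dH A B) ^ 2 * erPr p A) - ∑ A ∈ adjS n, (dH A Bstar) ^ 2 * erPr p A =
      ((∑ q ∈ edges B, (1 - 2 * p q.1 q.2)) + ∑ q ∈ pairs n, p q.1 q.2) ^ 2 -
        ((∑ q ∈ edges Bstar, (1 - 2 * p q.1 q.2)) + ∑ q ∈ pairs n, p q.1 q.2) ^ 2 := by
    rw [F2_eq p B, F2_eq p Bstar, M_split p B, M_split p Bstar]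
    ring
  have hle : ∑ q ∈ edges Bstar, (1 - 2 * p q.1 q.2) ≤ ∑ q ∈ edges B, (1 - 2 * p q.1 q.2) := by
    have hEstar : edges Bstar = (pairs n).filter (fun q => 1 - 2 * p q.1 q.2 < 0) := by
      rw [edges]
      refine Finset.filter_congr fun q hq => ?_
      rw [hBstar q hq]
      constructor <;> intro h <;> linarith
    calc ∑ q ∈ edges Bstar, (1 - 2 * p q.1 q.2)
        ≤ ∑ q ∈ (edges B).filter (fun q => 1 - 2 * p q.1 q.2 < 0), (1 - 2 * p q.1 q.2) := by
          have hsub : (edges B).filter (fun q => 1 - 2 * p q.1 q.2 < 0) ⊆ edges Bstar := by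
            rw [hEstar]
            intro q hq
            rw [Finset.mem_filter] at hq ⊢
            exact ⟨(Finset.mem_filter.1 hq.1).1, hq.2⟩
          have hsd := Finset.sum_sdiff (f := fun q => 1 - 2 * p q.1 q.2) hsub
          have hneg : ∑ q ∈ edges Bstar \ (edges B).filter (fun q => 1 - 2 * p q.1 q.2 < 0),
              (1 - 2 * p q.1 q.2) ≤ 0 := by
            refine Finset.sum_nonpos fun q hq => ?_
            have hmem := (Finset.mem_sdiff.1 hq).1
            rw [hEstar, Finset.mem_filter] at hmem
            linarith [hmem.2]
          linarith
      _ ≤ ∑ q ∈ edges B, (1 - 2 * p q.1 q.2) := by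
          refine Finset.sum_le_sum_of_subset_of_nonneg (Finset.filter_subset _ _)
            fun q hq hq' => ?_
          rw [Finset.mem_filter] at hq'
          push_neg at hq'
          linarith [hq' hq]
  have hnn : 0 ≤ (∑ q ∈ edges Bstar, (1 - 2 * p q.1 q.2)) + ∑ q ∈ pairs n, p q.1 q.2 := by
    rw [← M_split p Bstar]
    exact M_nonneg p hp Bstar
  refine ⟨hEq, hle, hnn, ?_⟩
  rw [hEq]
  have := pow_le_pow_left₀ hnn (by linarith : (∑ q ∈ edges Bstar, (1 - 2 * p q.1 q.2)) + ∑ q ∈ pairs n, p q.1 q.2 ≤ (∑ q ∈ edges B, (1 - 2 * p q.1 q.2)) + ∑ q ∈ pairs n, p q.1 q.2) 2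
  linarith
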